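/- Suppose G_P is connected, P has Q-bounded measure ratios (ν(R) ≤ Q·ν(R') for all regions R, R'), every vertex of G_P has degree at most D with D ≥ 2, and f̂ : P → E is a coarse embedding of G_P into a Banach space E with control functions ρ₋, ρ₊. Set r = (1/log D)·log(|P|/(2Q)) − 1, where |P| is the number of regions. If r ≥ 0, then the induced function f : X → E satisfies ‖f‖_B ≥ (1/4)·ρ₋(r). -/

import Mathlib

open MeasureTheory

/-- The approximating graph `G_P` of a partition `P` with respect to an action of `Γ` on `(X, ν)`:
vertices are the regions of `P`, and two distinct regions `A, B` are adjacent iff there is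
`s ∈ S` with `ν ((s • A) ∩ B) > 0`.  (Under the standing hypotheses — `S` symmetric and the
action measure preserving — the relation below is symmetric, so `fromRel` yields exactly this
graph.) -/
def approxGraph {Γ X : Type*} [Group Γ] [MulAction Γ X] [MeasurableSpace X]
    (ν : Measure X) (S : Finset Γ) (P : Finset (Set X)) :
    SimpleGraph {A : Set X // A ∈ P} :=
  SimpleGraph.fromRel fun A B => ∃ s ∈ S, 0 < ν ((fun y => s • y) '' A.1 ∩ B.1)

lemma geomAux {D : ℕ} (hD : 2 ≤ D) : ∀ n, ∑ k ∈ Finset.range n, D^k ≤ D^n := by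
  intro n
  induction n with
  | zero => simp
  | succ n ih =>
    rw [Finset.sum_range_succ]
    calc ∑ k ∈ Finset.range n, D^k + D^n ≤ D^n + D^n := by omega
      _ = 2 * D^n := by ring
      _ ≤ D * D^n := Nat.mul_le_mul_right _ hD
      _ = D^(n+1) := by rw [pow_succ, Nat.mul_comm]

lemma sphereCardAux {V : Type*} [Fintype V] (G : SimpleGraph V)
    (hc : G.Connected) {D : ℕ} (hD : 2 ≤ D)
    (hdeg : ∀ v : V, {w | G.Adj v w}.ncard ≤ D) (A₀ : V) :
    ∀ k : ℕ, (Finset.univ.filter fun B => G.dist A₀ B = k).card ≤ D ^ k := by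
  classical
  intro k
  induction k with
  | zero =>
    have hsub : (Finset.univ.filter fun B => G.dist A₀ B = 0) ⊆ {A₀} := by
      intro B hB
      simp only [Finset.mem_filter, Finset.mem_univ, true_and] at hB
      simp [ (hc.dist_eq_zero_iff).mp hB ]
    simpa using Finset.card_le_card hsub
  | succ k ih =>
    have hex : ∀ B : V, G.dist A₀ B = k + 1 → ∃ C, G.dist A₀ C = k ∧ G.Adj C B := by
      intro B hB
      obtain ⟨p, hp⟩ := (hc.preconnected A₀ B).exists_walk_length_eq_dist
      have hnn : ¬ p.reverse.Nil := by
        rw [SimpleGraph.Walk.nil_iff_length_eq]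
        rw [SimpleGraph.Walk.length_reverse, hp, hB]
        omega
      obtain ⟨C, hadj, q, hq⟩ := SimpleGraph.Walk.not_nil_iff.mp hnn
      refine ⟨C, ?_, hadj.symm⟩
      have hql : q.length = k := by
        have h1 := congrArg SimpleGraph.Walk.length hq
        rw [SimpleGraph.Walk.length_reverse, hp, hB] at h1
        simp only [SimpleGraph.Walk.length_cons] at h1
        omega
      have h1 : G.dist A₀ C ≤ k := by
        have := SimpleGraph.dist_le q.reverse
        rwa [SimpleGraph.Walk.length_reverse, hql] at this
      have h2 : k ≤ G.dist A₀ C := by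
        by_contra h
        push_neg at h
        obtain ⟨w, hw⟩ := (hc.preconnected A₀ C).exists_walk_length_eq_dist
        have := SimpleGraph.dist_le (w.concat hadj.symm)
        rw [SimpleGraph.Walk.length_concat, hw, hB] at this
        omega
      omega
    set φ : V → V := fun B =>
      if h : G.dist A₀ B = k + 1 then (hex B h).choose else A₀ with hφ
    have hmap : ∀ B ∈ Finset.univ.filter (fun B => G.dist A₀ B = k+1),
        φ B ∈ Finset.univ.filter (fun B => G.dist A₀ B = k) := by
      intro B hB
      simp only [Finset.mem_filter, Finset.mem_univ, true_and] at hB ⊢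
      rw [hφ]
      simp only [hB, dif_pos]
      exact (hex B hB).choose_spec.1
    have hfib : ∀ C ∈ Finset.univ.filter (fun B => G.dist A₀ B = k),
        ((Finset.univ.filter (fun B => G.dist A₀ B = k+1)).filter
          (fun B => φ B = C)).card ≤ D := by
      intro C _
      have hsub : ((Finset.univ.filter (fun B => G.dist A₀ B = k+1)).filter
          (fun B => φ B = C)) ⊆ {w | G.Adj C w}.toFinset := by
        intro B hB
        simp only [Finset.mem_filter, Finset.mem_univ, true_and] at hB
        obtain ⟨hB1, hB2⟩ := hB
        rw [hφ] at hB2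
        simp only [hB1, dif_pos] at hB2
        have := (hex B hB1).choose_spec.2
        rw [hB2] at this
        simpa using this
      calc _ ≤ {w | G.Adj C w}.toFinset.card := Finset.card_le_card hsub
        _ = {w | G.Adj C w}.ncard := (Set.ncard_eq_toFinset_card' _).symm
        _ ≤ D := hdeg C
    calc (Finset.univ.filter fun B => G.dist A₀ B = k+1).card
        ≤ D * (Finset.univ.filter fun B => G.dist A₀ B = k).card :=
          Finset.card_le_mul_card_image_of_maps_to hmap D hfib
      _ ≤ D * D^k := Nat.mul_le_mul_left _ ih
      _ = D^(k+1) := by rw [pow_succ, Nat.mul_comm]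

lemma ballCardAux {V : Type*} [Fintype V] (G : SimpleGraph V)
    (hc : G.Connected) {D : ℕ} (hD : 2 ≤ D)
    (hdeg : ∀ v : V, {w | G.Adj v w}.ncard ≤ D) (A₀ : V) (n : ℕ) :
    (Finset.univ.filter fun B => G.dist A₀ B ≤ n).card ≤ D ^ (n+1) := by
  classical
  have h1 : (Finset.univ.filter fun B => G.dist A₀ B ≤ n).card
      = ∑ k ∈ Finset.range (n+1),
        ((Finset.univ.filter fun B => G.dist A₀ B ≤ n).filter
          (fun B => G.dist A₀ B = k)).card := by
    apply Finset.card_eq_sum_card_fiberwise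
    intro B hB
    simp only [Finset.mem_coe, Finset.mem_filter, Finset.mem_univ, true_and] at hB
    simp only [Finset.mem_coe, Finset.mem_range]
    omega
  rw [h1]
  calc _ ≤ ∑ k ∈ Finset.range (n+1), D^k := by
        apply Finset.sum_le_sum
        intro k _
        calc ((Finset.univ.filter fun B => G.dist A₀ B ≤ n).filter
              (fun B => G.dist A₀ B = k)).card
            ≤ (Finset.univ.filter fun B => G.dist A₀ B = k).card := by
              apply Finset.card_le_card
              intro B hB
              simp only [Finset.mem_filter, Finset.mem_univ, true_and] at hB ⊢
              exact hB.2
          _ ≤ D^k := sphereCardAux G hc hD hdeg A₀ k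
    _ ≤ D^(n+1) := geomAux hD (n+1)

set_option maxHeartbeats 1000000 in
/-- Suppose the approximating graph `G_P` is connected, `P` has `Q`-bounded measure ratios, every
vertex of `G_P` has degree at most `D ≥ 2`, and `f̂ : P → E` is a coarse embedding of `G_P` into a
Banach space `E` with control functions `ρ₋, ρ₊`.  Set `r = (1/log D)·log(|P|/(2Q)) − 1`.
If `r ≥ 0`, then the induced function `f x = f̂ (R x)` satisfies `‖f‖_B ≥ (1/4)·ρ₋(r)`. -/
theorem statement2
    {Γ X E : Type*} [Group Γ] [MulAction Γ X] [MeasurableSpace X]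
    [NormedAddCommGroup E] [NormedSpace ℝ E] [CompleteSpace E]
    (ν : Measure X) [IsProbabilityMeasure ν]
    (S : Finset Γ)
    (hSsym : ∀ s ∈ S, s⁻¹ ∈ S)
    (hSgen : Subgroup.closure (S : Set Γ) = ⊤)
    (hact : ∀ γ : Γ, MeasurePreserving (fun x : X => γ • x) ν ν)
    (P : Finset (Set X))
    (hPmeas : ∀ A ∈ P, MeasurableSet A)
    (hPpos : ∀ A ∈ P, 0 < ν A)
    (hPdisj : ∀ A ∈ P, ∀ B ∈ P, A ≠ B → Disjoint A B)
    (R : X → Set X)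
    (hR : ∀ x : X, R x ∈ P ∧ x ∈ R x)
    (hconn : (approxGraph ν S P).Connected)
    (Q : ℝ)
    (hQ : ∀ A ∈ P, ∀ B ∈ P, (ν A).toReal ≤ Q * (ν B).toReal)
    (D : ℕ) (hD : 2 ≤ D)
    (hdeg : ∀ v : {A : Set X // A ∈ P}, {w | (approxGraph ν S P).Adj v w}.ncard ≤ D)
    (ρminus ρplus : ℝ → ℝ)
    (hmonoMinus : MonotoneOn ρminus (Set.Ici 0)) (hmonoPlus : MonotoneOn ρplus (Set.Ici 0))
    (hnnMinus : ∀ x ≥ (0:ℝ), 0 ≤ ρminus x) (hnnPlus : ∀ x ≥ (0:ℝ), 0 ≤ ρplus x)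
    (hunbMinus : ∀ c : ℝ, ∃ x ≥ (0:ℝ), c ≤ ρminus x) (hunbPlus : ∀ c : ℝ, ∃ x ≥ (0:ℝ), c ≤ ρplus x)
    (fhat : {A : Set X // A ∈ P} → E)
    (hemb : ∀ A B : {A : Set X // A ∈ P},
      ρminus ((approxGraph ν S P).dist A B : ℝ) ≤ ‖fhat A - fhat B‖ ∧
      ‖fhat A - fhat B‖ ≤ ρplus ((approxGraph ν S P).dist A B : ℝ))
    (hr : 0 ≤ (1 / Real.log D) * Real.log ((P.card : ℝ) / (2 * Q)) - 1) :
    (1 / 4 : ℝ) * ρminus ((1 / Real.log D) * Real.log ((P.card : ℝ) / (2 * Q)) - 1)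
      ≤ Real.sqrt (∫ x, ‖fhat ⟨R x, (hR x).1⟩‖ ^ 2 ∂ν) := by
  classical
  set G := approxGraph ν S P with hGdef
  clear_value G
  set r : ℝ := (1 / Real.log D) * Real.log ((P.card : ℝ) / (2 * Q)) - 1 with hrdef
  set c : ℝ := ρminus r with hcdef
  have hc0 : 0 ≤ c := by rw [hcdef]; exact hnnMinus r hr
  clear_value c
  haveI hVne : Nonempty {A : Set X // A ∈ P} := hconn.nonempty
  -- minimizer
  obtain ⟨A₀, -, hA₀min⟩ := Finset.exists_min_image Finset.univ
    (fun A : {A : Set X // A ∈ P} => ‖fhat A‖)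
    ⟨Classical.arbitrary _, Finset.mem_univ _⟩
  -- basic positivity facts
  have hPcard : 0 < P.card := Finset.card_pos.mpr ⟨A₀.1, A₀.2⟩
  have hPc1 : (1:ℝ) ≤ (P.card : ℝ) := by exact_mod_cast hPcard
  have hA₀pos : 0 < (ν A₀.1).toReal :=
    ENNReal.toReal_pos (hPpos A₀.1 A₀.2).ne' (measure_ne_top ν _)
  have hQ1 : (1:ℝ) ≤ Q := by
    have := hQ A₀.1 A₀.2 A₀.1 A₀.2
    nlinarith
  have hQ0 : 0 < Q := by linarith
  have hz : 0 < (P.card : ℝ) / (2 * Q) := div_pos (by linarith) (by linarith)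
  have hD1 : (1:ℝ) < (D:ℝ) := by exact_mod_cast (by omega : 1 < D)
  have hlogD : 0 < Real.log D := Real.log_pos hD1
  -- r + 1 and the rpow identity
  have hrpow : (D:ℝ) ^ (r+1) = (P.card : ℝ) / (2 * Q) := by
    rw [Real.rpow_def_of_pos (by linarith)]
    have h : Real.log D * (r + 1) = Real.log ((P.card : ℝ) / (2 * Q)) := by
      rw [hrdef]
      have hne := hlogD.ne'
      field_simp
      ring
    rw [h, Real.exp_log hz]
  clear_value r
  set n : ℕ := ⌊r⌋₊ with hndef
  have hn_le : ((n:ℝ)) ≤ r := by rw [hndef]; exact Nat.floor_le hr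
  have hr_lt : r < (n:ℝ) + 1 := by rw [hndef]; exact Nat.lt_floor_add_one r
  clear_value n
  -- cardinality of near ball
  set near : Finset {A : Set X // A ∈ P} :=
    Finset.univ.filter (fun B => G.dist A₀ B ≤ n) with hneardef
  clear_value near
  have hnearcard : (near.card : ℝ) ≤ (P.card : ℝ) / (2 * Q) := by
    have h1 : near.card ≤ D ^ (n+1) := by
      rw [hneardef]; exact ballCardAux G hconn hD hdeg A₀ n
    have h2 : ((D:ℝ)) ^ ((n:ℕ)+1 : ℕ) ≤ (D:ℝ) ^ (r+1) := by
      rw [← Real.rpow_natCast (D:ℝ) (n+1)]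
      apply Real.rpow_le_rpow_of_exponent_le (le_of_lt hD1)
      push_cast
      linarith
    calc (near.card : ℝ) ≤ ((D:ℝ)) ^ ((n:ℕ)+1 : ℕ) := by exact_mod_cast h1
      _ ≤ (D:ℝ) ^ (r+1) := h2
      _ = (P.card : ℝ) / (2 * Q) := hrpow
  -- total measure and per-region bound
  have hUnion : ⋃ A ∈ P, A = Set.univ := by
    apply Set.eq_univ_iff_forall.mpr
    intro x
    exact Set.mem_biUnion (hR x).1 (hR x).2
  have hPdisj' : (↑P : Set (Set X)).PairwiseDisjoint id := by
    intro A hA B hB hAB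
    exact hPdisj A hA B hB hAB
  have hsum1 : ∑ A ∈ P, (ν A).toReal = 1 := by
    have h1 : ν (⋃ A ∈ P, A) = ∑ A ∈ P, ν A :=
      measure_biUnion_finset hPdisj' (fun A hA => hPmeas A hA)
    rw [hUnion, measure_univ] at h1
    have h2 := congrArg ENNReal.toReal h1
    rw [ENNReal.toReal_sum (fun A _ => measure_ne_top ν A)] at h2
    simpa using h2.symm
  have hreg : ∀ B ∈ P, (ν B).toReal ≤ Q / (P.card : ℝ) := by
    intro B hB
    have h1 : (P.card : ℝ) * (ν B).toReal ≤ Q := by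
      calc (P.card : ℝ) * (ν B).toReal = ∑ _A ∈ P, (ν B).toReal := by
            rw [Finset.sum_const, nsmul_eq_mul]
        _ ≤ ∑ A ∈ P, Q * (ν A).toReal :=
            Finset.sum_le_sum (fun A hA => hQ B hB A hA)
        _ = Q * ∑ A ∈ P, (ν A).toReal := by rw [Finset.mul_sum]
        _ = Q := by rw [hsum1, mul_one]
    rw [div_eq_inv_mul, ← mul_le_mul_iff_right₀ (show (0:ℝ) < (P.card:ℝ) by linarith)]
    calc (P.card : ℝ) * (ν B).toReal ≤ Q := h1
      _ = (P.card : ℝ) * ((P.card:ℝ)⁻¹ * Q) := by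
          field_simp
  -- the near set N and its measure
  set N : Set X := ⋃ B ∈ near, B.1 with hNdef
  clear_value N
  have hNmeas : MeasurableSet N := by
    rw [hNdef]
    exact Finset.measurableSet_biUnion near (fun B _ => hPmeas B.1 B.2)
  have hNν : (ν N).toReal ≤ 1/2 := by
    have hdisj : (↑near : Set {A : Set X // A ∈ P}).PairwiseDisjoint
        (fun B : {A : Set X // A ∈ P} => B.1) := by
      intro A hA B hB hAB
      exact hPdisj A.1 A.2 B.1 B.2 (fun h => hAB (Subtype.ext h))
    have h1 : ν N = ∑ B ∈ near, ν B.1 := by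
      rw [hNdef]
      exact measure_biUnion_finset hdisj (fun B _ => hPmeas B.1 B.2)
    have h2 : (ν N).toReal = ∑ B ∈ near, (ν B.1).toReal := by
      rw [h1, ENNReal.toReal_sum (fun B _ => measure_ne_top ν _)]
    have e1 : ∑ B ∈ near, (ν B.1).toReal ≤ (near.card : ℝ) * (Q / (P.card : ℝ)) := by
      have h3 : ∑ B ∈ near, (ν B.1).toReal ≤ ∑ _B ∈ near, Q / (P.card : ℝ) :=
        Finset.sum_le_sum (fun B _ => hreg B.1 B.2)
      rwa [Finset.sum_const, nsmul_eq_mul] at h3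
    have e2 : (near.card : ℝ) * (Q / (P.card : ℝ))
        ≤ ((P.card : ℝ) / (2 * Q)) * (Q / (P.card : ℝ)) :=
      mul_le_mul_of_nonneg_right hnearcard (div_nonneg hQ0.le (Nat.cast_nonneg _))
    have e3 : ((P.card : ℝ) / (2 * Q)) * (Q / (P.card : ℝ)) = 1/2 := by
      have hQne : Q ≠ 0 := ne_of_gt hQ0
      have hPne : (P.card:ℝ) ≠ 0 := by linarith
      field_simp
    rw [h2]
    linarith
  -- the far set
  set F : Set X := Nᶜ with hFdef
  clear_value F
  have hFmeas : MeasurableSet F := by rw [hFdef]; exact hNmeas.compl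
  have hFν : 1/2 ≤ (ν F).toReal := by
    have h1 : ν N + ν F = 1 := by
      rw [hFdef, measure_add_measure_compl hNmeas, measure_univ]
    have h2 : (ν N).toReal + (ν F).toReal = 1 := by
      have := congrArg ENNReal.toReal h1
      rwa [ENNReal.toReal_add (measure_ne_top ν _) (measure_ne_top ν _),
        ENNReal.toReal_one] at this
    linarith
  -- the induced function
  set g : X → ℝ := fun x => ‖fhat ⟨R x, (hR x).1⟩‖ ^ 2 with hgdef
  clear_value g
  -- pointwise bound on F
  have hpoint : ∀ x ∈ F, (c/2)^2 ≤ g x := by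
    intro x hx
    have hxN : x ∉ N := by rw [hFdef] at hx; exact hx
    set B : {A : Set X // A ∈ P} := ⟨R x, (hR x).1⟩ with hBdef
    have hBnear : B ∉ near := by
      intro hmem
      apply hxN
      rw [hNdef]
      exact Set.mem_biUnion hmem (hR x).2
    have hdist : n + 1 ≤ G.dist A₀ B := by
      by_contra h
      push_neg at h
      apply hBnear
      rw [hneardef]
      exact Finset.mem_filter.mpr ⟨Finset.mem_univ _, by omega⟩
    have hdistr : r ≤ (G.dist A₀ B : ℝ) := by
      have : ((n:ℝ)) + 1 ≤ (G.dist A₀ B : ℝ) := by exact_mod_cast hdist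
      linarith
    have h1 : c ≤ ρminus ((G.dist A₀ B : ℝ)) := by
      rw [hcdef]
      exact hmonoMinus hr (le_trans hr hdistr) hdistr
    have h2 : ρminus ((G.dist A₀ B : ℝ)) ≤ ‖fhat A₀ - fhat B‖ := (hemb A₀ B).1
    have h3 : ‖fhat A₀ - fhat B‖ ≤ ‖fhat A₀‖ + ‖fhat B‖ := norm_sub_le _ _
    have h4 : ‖fhat A₀‖ ≤ ‖fhat B‖ := hA₀min B (Finset.mem_univ B)
    have h5 : c/2 ≤ ‖fhat B‖ := by linarith
    have h6 : 0 ≤ c/2 := by linarith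
    have h7 : (c/2)^2 ≤ ‖fhat B‖^2 := by nlinarith
    simpa only [hgdef, hBdef] using h7
  -- integrability
  have hgeq : g = fun x => ∑ A : {A : Set X // A ∈ P},
      Set.indicator A.1 (fun _ => ‖fhat A‖^2) x := by
    rw [hgdef]
    funext x
    have h := Finset.sum_eq_single
      (f := fun A : {A : Set X // A ∈ P} => Set.indicator A.1 (fun _ => ‖fhat A‖^2) x)
      (⟨R x, (hR x).1⟩ : {A : Set X // A ∈ P})
      (fun A _ hA => by
        apply Set.indicator_of_notMem
        intro hxA
        apply hA
        apply Subtype.ext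
        by_contra hne
        exact Set.disjoint_left.mp (hPdisj A.1 A.2 (R x) (hR x).1 hne) hxA (hR x).2)
      (fun h => absurd (Finset.mem_univ _) h)
    rw [h]
    exact (Set.indicator_of_mem (hR x).2
      (fun _ => ‖fhat (⟨R x, (hR x).1⟩ : {A : Set X // A ∈ P})‖^2)).symm
  have hgint : Integrable g ν := by
    rw [hgeq]
    exact integrable_finset_sum _ (fun A _ =>
      (integrable_const _).indicator (hPmeas A.1 A.2))
  have hgnn : ∀ x, 0 ≤ g x := by
    intro x
    simp only [hgdef]
    positivity
  -- integral bounds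
  have hint1 : ((c/2)^2) * (ν F).toReal ≤ ∫ x in F, g x ∂ν :=
    by have := setIntegral_ge_of_const_le hFmeas (measure_ne_top ν F) hpoint hgint.integrableOn
       rw [smul_eq_mul, mul_comm] at this; exact this
  have hint2 : ∫ x in F, g x ∂ν ≤ ∫ x, g x ∂ν :=
    setIntegral_le_integral hgint (Filter.Eventually.of_forall hgnn)
  have hint3 : (c/2)^2 * (1/2) ≤ ∫ x, g x ∂ν := by
    have := mul_le_mul_of_nonneg_left hFν (show (0:ℝ) ≤ (c/2)^2 from sq_nonneg _)
    linarith
  -- conclude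
  have hfinal : (c/4)^2 ≤ ∫ x, g x ∂ν := by nlinarith [sq_nonneg c]
  calc (1/4 : ℝ) * c = c/4 := by ring
    _ = Real.sqrt ((c/4)^2) := (Real.sqrt_sq (by linarith)).symm
    _ ≤ Real.sqrt (∫ x, g x ∂ν) := Real.sqrt_le_sqrt hfinal
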